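/- Let θ ∈ (0, π/2] and let A be a real n×n matrix that is diagonally ℂ⁰_θ-dominant. Then for every positive diagonal matrix D, every eigenvalue λ of DA lies in the open conic sector ℂ⁰_θ around the negative real axis with half-angle θ. -/

import Mathlib

/-- Diagonal ℂ⁰_θ-dominance implies (ℂ⁰_θ, D)-stability: for every positive diagonal D,
the spectrum of DA lies in the sector {x+iy : x < 0, |y| < (−x)tan θ}
(expressed as |y|·cos θ < (−x)·sin θ). -/
theorem sector_D_stability {n : ℕ} (θ : ℝ) (hθ : 0 < θ ∧ θ ≤ Real.pi / 2)
    (A : Matrix (Fin n) (Fin n) ℝ)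
    (hneg : ∀ i, A i i < 0)
    (hdom : ∀ i, ∑ j ∈ Finset.univ.erase i, |A i j| < Real.sin θ * |A i i|)
    (d : Fin n → ℝ) (hd : ∀ i, 0 < d i) :
    ∀ lam ∈ spectrum ℂ ((Matrix.diagonal d * A).map (Complex.ofReal)),
      lam.re < 0 ∧ |lam.im| * Real.cos θ < (-lam.re) * Real.sin θ := by
  intro lam hlam
  set M := (Matrix.diagonal d * A).map (Complex.ofReal) with hM
  -- convert spectrum membership to eigenvalue
  have heig : Module.End.HasEigenvalue (Matrix.toLin' M) lam := by
    rw [Module.End.hasEigenvalue_iff_mem_spectrum, ← Matrix.toLin_eq_toLin']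
    have he : Matrix.toLin (Pi.basisFun ℂ (Fin n)) (Pi.basisFun ℂ (Fin n)) M
        = Matrix.toLinAlgEquiv (Pi.basisFun ℂ (Fin n)) M := rfl
    rw [he, AlgEquiv.spectrum_eq]
    exact hlam
  obtain ⟨k, hk⟩ := eigenvalue_mem_ball heig
  have hs : 0 < Real.sin θ := Real.sin_pos_of_pos_of_lt_pi hθ.1
    (lt_of_le_of_lt hθ.2 (by linarith [Real.pi_pos]))
  have hs1 : Real.sin θ ≤ 1 := Real.sin_le_one θ
  have hc : 0 ≤ Real.cos θ := Real.cos_nonneg_of_mem_Icc ⟨by linarith [Real.pi_pos], hθ.2⟩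
  have hMkj : ∀ j, M k j = ((d k * A k j : ℝ) : ℂ) := by
    intro j
    simp [hM, Matrix.map_apply, Matrix.diagonal_mul]
  have hsum : ∑ j ∈ Finset.univ.erase k, ‖M k j‖ = d k * ∑ j ∈ Finset.univ.erase k, |A k j| := by
    rw [Finset.mul_sum]
    refine Finset.sum_congr rfl fun j _ => ?_
    rw [hMkj j, Complex.norm_real, Real.norm_eq_abs, abs_mul, abs_of_pos (hd k)]
  set c : ℝ := d k * A k k with hcdef
  have hcneg : c < 0 := mul_neg_of_pos_of_neg (hd k) (hneg k)
  have hball : ‖(lam - (c : ℂ))‖ < Real.sin θ * (-c) := by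
    have h1 : dist lam (M k k) ≤ ∑ j ∈ Finset.univ.erase k, ‖M k j‖ := hk
    rw [hsum, hMkj k] at h1
    have h2 : d k * ∑ j ∈ Finset.univ.erase k, |A k j| < d k * (Real.sin θ * |A k k|) :=
      (mul_lt_mul_iff_right₀ (hd k)).2 (hdom k)
    have h3 : d k * (Real.sin θ * |A k k|) = Real.sin θ * (-c) := by
      rw [abs_of_neg (hneg k)]; ring
    calc ‖(lam - (c : ℂ))‖ = dist lam ((c : ℂ)) := by
          rw [Complex.dist_eq]
      _ ≤ d k * ∑ j ∈ Finset.univ.erase k, |A k j| := h1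
      _ < Real.sin θ * (-c) := h3 ▸ h2
  set x := lam.re; set y := lam.im
  have hre : |x - c| ≤ ‖(lam - (c : ℂ))‖ := by
    simpa using Complex.abs_re_le_norm (lam - (c : ℂ))
  have him : |y| ≤ ‖(lam - (c : ℂ))‖ := by
    simpa using Complex.abs_im_le_norm (lam - (c : ℂ))
  have hsq : (x - c) ^ 2 + y ^ 2 < (Real.sin θ * (-c)) ^ 2 := by
    have := Complex.sq_norm (lam - (c : ℂ))
    have habs : ‖(lam - (c : ℂ))‖ ^ 2 = (x - c) ^ 2 + y ^ 2 := by
      rw [Complex.sq_norm, Complex.normSq_apply]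
      simp [x, y]; ring
    nlinarith [norm_nonneg (lam - (c : ℂ))]
  have hx : x < 0 := by
    have := abs_lt.1 (lt_of_le_of_lt hre hball)
    nlinarith
  refine ⟨hx, ?_⟩
  have hpyth : Real.sin θ ^ 2 + Real.cos θ ^ 2 = 1 := Real.sin_sq_add_cos_sq θ
  -- key algebraic inequality
  have hkey : (|y| * Real.cos θ) ^ 2 < ((-x) * Real.sin θ) ^ 2 := by
    have h1 : y ^ 2 ≤ |y| ^ 2 := by rw [sq_abs]
    rcases eq_or_lt_of_le hc with h0 | h0
    · have h2 : (0:ℝ) < ((-x) * Real.sin θ) ^ 2 := pow_pos (mul_pos (by linarith) hs) 2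
      rw [← h0]
      simpa using h2
    · have hcos2 : (0:ℝ) < Real.cos θ ^ 2 := pow_pos h0 2
      have h2 : ((x - c) ^ 2 + y ^ 2) * Real.cos θ ^ 2
          < (Real.sin θ * -c) ^ 2 * Real.cos θ ^ 2 := mul_lt_mul_of_pos_right hsq hcos2
      have hid : (Real.sin θ * -c) ^ 2 * Real.cos θ ^ 2
          = x ^ 2 * Real.sin θ ^ 2 + (x - c) ^ 2 * Real.cos θ ^ 2
            - (x - c * Real.cos θ ^ 2) ^ 2 := by
        linear_combination (c ^ 2 * Real.cos θ ^ 2 - x ^ 2) * hpyth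
      nlinarith [sq_abs y, sq_nonneg (x - c * Real.cos θ ^ 2)]
  have hrhs : 0 < (-x) * Real.sin θ := mul_pos (by linarith) hs
  exact lt_of_pow_lt_pow_left₀ 2 (le_of_lt hrhs) hkey
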